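/- Let φ be a perfect 2-coloring of Ci_∞(D_n) with positive outer degrees b, c satisfying b + c = 2n + 1. Then for every integer i with φ(i) ≠ φ(i+2), one has φ(i-2n+1) = φ(i+2) and φ(i+2n+1) = φ(i). -/

import Mathlib

/-- Neighborhood of `i` in the infinite circulant graph `Ci_∞(D_n)`,
`D_n = {±1, ±3, …, ±(2n-1)}`: the integers at odd distance less than `2n` from `i`. -/
noncomputable def nbrs (n : ℕ) (i : ℤ) : Finset ℤ :=
  (Finset.Icc (i - (2*(n:ℤ) - 1)) (i + (2*(n:ℤ) - 1))).filter (fun j => Odd (j - i))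

/-- `φ` is a perfect 2-coloring of `Ci_∞(D_n)` with outer degrees `(b, c)`:
every vertex of color 0 (black) has exactly `b` neighbors of color 1 (white), and
every vertex of color 1 has exactly `c` neighbors of color 0. -/
def Perfect2 (n : ℕ) (φ : ℤ → Fin 2) (b c : ℕ) : Prop :=
  (∀ i, φ i = 0 → ((nbrs n i).filter (fun j => φ j = 1)).card = b) ∧
  (∀ i, φ i = 1 → ((nbrs n i).filter (fun j => φ j = 0)).card = c)

lemma mem_nbrs' {n : ℕ} {i j : ℤ} :
    j ∈ nbrs n i ↔ (i - (2*(n:ℤ) - 1) ≤ j ∧ j ≤ i + (2*(n:ℤ) - 1) ∧ (j - i) % 2 = 1) := by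
  simp [nbrs, Finset.mem_filter, Finset.mem_Icc, Int.odd_iff, and_assoc]

lemma nbrs_eq_image (n : ℕ) (i : ℤ) :
    nbrs n i = (Finset.range (2*n)).image (fun k : ℕ => i - (2*(n:ℤ) - 1) + 2*k) := by
  ext j
  simp only [mem_nbrs', Finset.mem_image, Finset.mem_range]
  constructor
  · rintro ⟨h1, h2, h3⟩
    refine ⟨((j - (i - (2*(n:ℤ) - 1)))/2).toNat, by omega, by omega⟩
  · rintro ⟨k, hk, rfl⟩
    refine ⟨by omega, by omega, by omega⟩

lemma card_nbrs (n : ℕ) (i : ℤ) : (nbrs n i).card = 2*n := by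
  rw [nbrs_eq_image, Finset.card_image_of_injective, Finset.card_range]
  intro a b hab
  dsimp only at hab
  omega

lemma key (n p q : ℕ) (hpq : p + q = 2*n+1) (hn : 0 < n)
    (φ : ℤ → Fin 2) (u v : Fin 2) (huv : u ≠ v)
    (hu : ∀ j, φ j = u → ((nbrs n j).filter (fun k => φ k = v)).card = p)
    (hv : ∀ j, φ j = v → ((nbrs n j).filter (fun k => φ k = u)).card = q)
    (i : ℤ) (hiu : φ i = u) (hiv : φ (i+2) = v) :
    φ (i - 2*(n:ℤ) + 1) = v ∧ φ (i + 2*(n:ℤ) + 1) = u := by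
  set a : ℤ := i - 2*(n:ℤ) + 1 with ha_def
  set d : ℤ := i + 2*(n:ℤ) + 1 with hd_def
  set S : Finset ℤ := (nbrs n i).erase a with hS_def
  have hx : ∀ x : Fin 2, x = u ∨ x = v := by
    intro x; fin_cases u <;> fin_cases v <;> fin_cases x <;> simp_all
  have ha : a ∈ nbrs n i := by
    rw [mem_nbrs']; refine ⟨by omega, by omega, by omega⟩
  have h1 : nbrs n i = insert a S := (Finset.insert_erase ha).symm
  have h2 : nbrs n (i+2) = insert d S := by
    ext j
    simp only [mem_nbrs', Finset.mem_insert, Finset.mem_erase, hS_def, hd_def, ha_def]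
    omega
  have haS : a ∉ S := Finset.notMem_erase _ _
  have hdS : d ∉ S := by
    intro hmem
    have := Finset.mem_of_mem_erase hmem
    rw [mem_nbrs'] at this
    omega
  have hcardS : S.card = 2*n - 1 := by
    rw [hS_def, Finset.card_erase_of_mem ha, card_nbrs]
  -- partition of S by color
  have hpart : (S.filter (fun k => φ k = v)).card + (S.filter (fun k => φ k = u)).card
      = S.card := by
    have : S.filter (fun k => φ k = u) = S.filter (fun k => ¬ (φ k = v)) := by
      apply Finset.filter_congr
      intro j _
      rcases hx (φ j) with h' | h' <;> simp [h', huv, Ne.symm huv]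
    rw [this]
    exact Finset.card_filter_add_card_filter_not _
  -- count for i
  have hcount_i : ((nbrs n i).filter (fun k => φ k = v)).card
      = (S.filter (fun k => φ k = v)).card + (if φ a = v then 1 else 0) := by
    rw [h1, Finset.filter_insert]
    split
    · rw [Finset.card_insert_of_notMem (by simp [haS])]
    · simp
  have hcount_i2 : ((nbrs n (i+2)).filter (fun k => φ k = u)).card
      = (S.filter (fun k => φ k = u)).card + (if φ d = u then 1 else 0) := by
    rw [h2, Finset.filter_insert]
    split
    · rw [Finset.card_insert_of_notMem (by simp [hdS])]
    · simp
  have e1 := hu i hiu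
  have e2 := hv (i+2) hiv
  rw [hcount_i] at e1
  rw [hcount_i2] at e2
  by_cases hA : φ a = v <;> by_cases hD : φ d = u <;>
    simp [hA, hD] at e1 e2 <;> first
    | exact ⟨hA, hD⟩
    | omega

/-- If `b + c = 2n+1` and `φ(i) ≠ φ(i+2)`, then `φ(i-2n+1) = φ(i+2)`
and `φ(i+2n+1) = φ(i)`. -/
theorem neq_pattern_plus (n b c : ℕ) (hn : 0 < n) (hb : 0 < b) (hc : 0 < c)
    (hbc : b + c = 2*n + 1)
    (φ : ℤ → Fin 2) (hφ : Perfect2 n φ b c)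
    (i : ℤ) (h : φ i ≠ φ (i + 2)) :
    φ (i - 2*(n:ℤ) + 1) = φ (i + 2) ∧ φ (i + 2*(n:ℤ) + 1) = φ i := by
  obtain ⟨h0, h1⟩ := hφ
  have fin2 : ∀ x : Fin 2, x = 0 ∨ x = 1 := by decide
  have hcases : (φ i = 0 ∧ φ (i+2) = 1) ∨ (φ i = 1 ∧ φ (i+2) = 0) := by
    rcases fin2 (φ i) with hi | hi <;> rcases fin2 (φ (i+2)) with hi2 | hi2
    · exact absurd (hi.trans hi2.symm) h
    · exact Or.inl ⟨hi, hi2⟩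
    · exact Or.inr ⟨hi, hi2⟩
    · exact absurd (hi.trans hi2.symm) h
  rcases hcases with ⟨hi, hi2⟩ | ⟨hi, hi2⟩
  · have := key n b c hbc hn φ 0 1 (by decide) h0 h1 i hi hi2
    rw [hi, hi2]; exact this
  · have := key n c b (by omega) hn φ 1 0 (by decide) h1 h0 i hi hi2
    rw [hi, hi2]; exact this
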